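/- Let A be a commutative ring and F(y, z) ∈ A[[y, z]] a formal group law, so F(y, 0) = y, F(0, z) = z, F is commutative and associative. Write F(u, x) as a power series in x with coefficients in A[[u]]; its constant term in x is u. Then in the ring A((u))[[x]] of power series in x over the Laurent series ring A((u)), the element F(u, x) is invertible, and if 1/F(u, x) = Σ_{i ≥ 0} dᵢ xⁱ with dᵢ ∈ A((u)), and one writes dᵢ = Σ_{j ∈ ℤ} c_{i,j} uʲ, then c_{i,j} = 0 whenever j < −i − 1. -/

import Mathlib

/-- `stmt4PowCoeff a m i j` is the coefficient of `yⁱ zʲ` in `F(y,z)^m`, where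
`F(y,z) = Σ a i j yⁱ zʲ` is a two-variable power series with coefficients `a`. -/
def stmt4PowCoeff {A : Type*} [CommRing A] (a : ℕ → ℕ → A) : ℕ → ℕ → ℕ → A
  | 0, i, j => if i = 0 ∧ j = 0 then 1 else 0
  | m + 1, i, j => ∑ p ∈ Finset.range (i + 1), ∑ q ∈ Finset.range (j + 1),
      stmt4PowCoeff a m p q * a (i - p) (j - q)

/-- `F(u,x)` viewed as a power series in `x` over the Laurent series ring `A((u))`:
its coefficient of `xⁱ` is the power series `Σₘ a m i uᵐ ∈ A[[u]] ⊆ A((u))`. -/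
noncomputable def stmt4Fux {A : Type*} [CommRing A] (a : ℕ → ℕ → A) :
    PowerSeries (LaurentSeries A) :=
  PowerSeries.mk fun i => HahnSeries.ofPowerSeries ℤ A (PowerSeries.mk fun m => a m i)


private lemma stmt4_le_orderTop {A : Type*} [CommRing A] {x : LaurentSeries A} {c : ℤ}
    (h : ∀ j < c, x.coeff j = 0) : (c : WithTop ℤ) ≤ x.orderTop := by
  by_contra hlt
  push_neg at hlt
  obtain ⟨g, hg⟩ := WithTop.ne_top_iff_exists.mp (ne_top_of_lt hlt)
  have hgc : g < c := by
    rw [← hg] at hlt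
    exact_mod_cast hlt
  exact HahnSeries.coeff_orderTop_ne hg.symm (h g hgc)

private lemma stmt4_ofPS_coeff_neg {A : Type*} [CommRing A] (p : PowerSeries A) {j : ℤ}
    (hj : j < 0) : (HahnSeries.ofPowerSeries ℤ A p).coeff j = 0 := by
  rw [HahnSeries.ofPowerSeries_apply]
  apply HahnSeries.embDomain_notin_range
  rintro ⟨n, hn⟩
  have hn' : (n : ℤ) = j := hn
  omega

private theorem stmt4_main {A : Type*} [CommRing A] (a : ℕ → ℕ → A)
    (hy : ∀ i, a i 0 = if i = 1 then 1 else 0) :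
    IsUnit (stmt4Fux a) ∧
    ∀ d : PowerSeries (LaurentSeries A), stmt4Fux a * d = 1 →
      ∀ (i : ℕ) (j : ℤ), j < -(i : ℤ) - 1 →
        (PowerSeries.coeff i d).coeff j = 0 := by
  have hX : (PowerSeries.mk fun m => a m 0) = (PowerSeries.X : PowerSeries A) := by
    ext m
    simp [hy m, PowerSeries.coeff_X]
  have hf0 : PowerSeries.coeff 0 (stmt4Fux a)
      = HahnSeries.single (1 : ℤ) (1 : A) := by
    simp only [stmt4Fux, PowerSeries.coeff_mk]
    rw [hX, HahnSeries.ofPowerSeries_X]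
  have hunit : IsUnit (HahnSeries.single (1 : ℤ) (1 : A)) := by
    refine IsUnit.of_mul_eq_one (HahnSeries.single (-1 : ℤ) (1 : A)) ?_
    rw [HahnSeries.single_mul_single, add_neg_cancel, mul_one, HahnSeries.single_zero_one]
  constructor
  · rw [PowerSeries.isUnit_iff_constantCoeff, ← PowerSeries.coeff_zero_eq_constantCoeff_apply,
      hf0]
    exact hunit
  · intro d hd
    have key : ∀ i : ℕ, ∀ j : ℤ, j < -(i : ℤ) - 1 →
        (PowerSeries.coeff i d).coeff j = 0 := by
      intro i
      induction i using Nat.strong_induction_on with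
      | _ i ih =>
        intro j hj
        have heq := congrArg (PowerSeries.coeff i) hd
        rw [PowerSeries.coeff_mul, PowerSeries.coeff_one,
          Finset.Nat.sum_antidiagonal_eq_sum_range_succ_mk, Finset.sum_range_succ'] at heq
        -- heq : ∑ k ∈ range i, f (k+1) * e (i - (k+1)) + f 0 * e (i - 0) = if i = 0 then 1 else 0
        have heqc := congrArg (HahnSeries.coeff.addMonoidHom (j + 1)) heq
        simp only [map_add, map_sum, HahnSeries.coeff.addMonoidHom_apply] at heqc
        rw [Nat.sub_zero, hf0, HahnSeries.coeff_single_mul_add] at heqc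
        have hsum : ∀ k ∈ Finset.range i,
            ((PowerSeries.coeff (k + 1) (stmt4Fux a)) *
              (PowerSeries.coeff (i - (k + 1)) d)).coeff (j + 1) = 0 := by
          intro k hk
          rw [Finset.mem_range] at hk
          set m := i - (k + 1) with hm
          have hmi : m < i := by omega
          apply HahnSeries.coeff_eq_zero_of_lt_orderTop
          have h1 : ((0 : ℤ) : WithTop ℤ) ≤
              (PowerSeries.coeff (k + 1) (stmt4Fux a)).orderTop := by
            apply stmt4_le_orderTop
            intro j' hj'
            simp only [stmt4Fux, PowerSeries.coeff_mk]
            exact stmt4_ofPS_coeff_neg _ hj'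
          have h2 : ((-(m : ℤ) - 1 : ℤ) : WithTop ℤ) ≤
              (PowerSeries.coeff m d).orderTop :=
            stmt4_le_orderTop (fun j' hj' => ih m hmi j' hj')
          calc ((j + 1 : ℤ) : WithTop ℤ)
              < ((0 + (-(m : ℤ) - 1) : ℤ) : WithTop ℤ) := by
                exact_mod_cast (by omega : (j + 1 : ℤ) < 0 + (-(m : ℤ) - 1))
            _ ≤ (PowerSeries.coeff (k + 1) (stmt4Fux a)).orderTop
                  + (PowerSeries.coeff m d).orderTop := by
                push_cast
                exact add_le_add h1 h2
            _ ≤ _ := HahnSeries.orderTop_add_le_mul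
        rw [Finset.sum_eq_zero hsum, zero_add] at heqc
        have hone : ((if i = 0 then 1 else 0 : LaurentSeries A)).coeff (j + 1) = 0 := by
          split
          · rw [HahnSeries.coeff_one]
            have : j + (1 : ℤ) ≠ 0 := by omega
            simp [this]
          · exact HahnSeries.coeff_zero
        rw [hone] at heqc
        rw [mul_comm] at heqc
        simpa using heqc
    exact key

/-- Let `F(y,z) = Σ a i j yⁱ zʲ` be a formal group law over a commutative ring `A`
(identity axioms `F(y,0) = y`, `F(0,z) = z`, commutativity, and associativity, stated
coefficientwise; associativity compares the coefficients of `yⁱ zʲ wᵏ` in `F(F(y,z),w)`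
and `F(y,F(z,w))`).  Then `F(u,x)` is invertible in `A((u))[[x]]`, and if
`1/F(u,x) = Σᵢ dᵢ xⁱ` with `dᵢ = Σⱼ c_{i,j} uʲ ∈ A((u))`, then `c_{i,j} = 0`
whenever `j < -i - 1`. -/
theorem stmt_4 {A : Type*} [CommRing A] (a : ℕ → ℕ → A)
    (hy : ∀ i, a i 0 = if i = 1 then 1 else 0)
    (hz : ∀ j, a 0 j = if j = 1 then 1 else 0)
    (hcomm : ∀ i j, a i j = a j i)
    (hassoc : ∀ i j k : ℕ,
      ∑ m ∈ Finset.range (i + j + 1), a m k * stmt4PowCoeff a m i j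
        = ∑ n ∈ Finset.range (j + k + 1), a i n * stmt4PowCoeff a n j k) :
    IsUnit (stmt4Fux a) ∧
    ∀ d : PowerSeries (LaurentSeries A), stmt4Fux a * d = 1 →
      ∀ (i : ℕ) (j : ℤ), j < -(i : ℤ) - 1 →
        (PowerSeries.coeff i d).coeff j = 0 := by
  exact stmt4_main a hy
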